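/- Let Σ₁ = Σ₂ = P(ℂ²) projective line (unit rays in ℂ²) with the usual orthogonality ⊥. For a ray q let C(q) := {r : |⟨Q,R⟩| = √3/2 for unit vectors Q ∈ q, R ∈ r}. Define on Σ = Σ₁×Σ₂ the relation p ⊥₂ q ⇔ p # q or (q₁ ∈ C(p₁) and q₂ ∈ C(p₂)), where p # q ⇔ p₁ ⊥ q₁ or p₂ ⊥ q₂. Then ⊥₂ is an orthogonality relation on Σ: it is anti-reflexive, symmetric, and {p}^{⊥₂⊥₂} = {p} for every p. -/

import Mathlib

open Set

/-- For a binary relation `R` on `α` and `a ⊆ α`, the set `a^⊥ = {q : q ⊥ p for all p ∈ a}`. -/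
def pol {α : Type*} (R : α → α → Prop) (a : Set α) : Set α := {q | ∀ p ∈ a, R q p}

/-- An orthogonality relation: anti-reflexive, symmetric, singletons biorthogonally closed. -/
def IsOrthRel {α : Type*} (R : α → α → Prop) : Prop :=
  (∀ p, ¬ R p p) ∧ (∀ p q, R p q → R q p) ∧ ∀ p : α, pol R (pol R {p}) = {p}

/-- A p-lattice on `α`: contains `∅`, `univ`, all singletons, closed under arbitrary
intersections. -/
def IsPLattice {α : Type*} (L : Set (Set α)) : Prop :=
  ∅ ∈ L ∧ Set.univ ∈ L ∧ (∀ S ⊆ L, ⋂₀ S ∈ L) ∧ ∀ p : α, {p} ∈ L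

/-- The join (closure) of a subset `s` in a p-lattice `L`: the intersection of all members of
`L` containing `s`. -/
def cl {α : Type*} (L : Set (Set α)) (s : Set α) : Set α := ⋂₀ {c ∈ L | s ⊆ c}

/-- The separated-product relation `#` on `α × β`: `p # q ↔ p₁ ⊥₁ q₁ or p₂ ⊥₂ q₂`. -/
def sharp {α β : Type*} (R1 : α → α → Prop) (R2 : β → β → Prop) :
    α × β → α × β → Prop := fun p q => R1 p.1 q.1 ∨ R2 p.2 q.2

noncomputable section

open Projectivization

/-- The projective line of `ℂ²`. -/
abbrev PC2 := Projectivization ℂ (EuclideanSpace ℂ (Fin 2))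

/-- The usual orthogonality of rays in `ℂ²`. -/
def perp (p q : PC2) : Prop := (inner ℂ p.rep q.rep : ℂ) = 0

/-- `C(q) = {r : |⟨Q,R⟩| = √3/2 for unit vectors Q ∈ q, R ∈ r}`. -/
def Cset (q : PC2) : Set PC2 :=
  {r | ‖(inner ℂ q.rep r.rep : ℂ)‖ = Real.sqrt 3 / 2 * (‖q.rep‖ * ‖r.rep‖)}

/-- The relation `⊥₂` on `Σ = Σ₁ × Σ₂`:
`p ⊥₂ q ⇔ p # q or (q₁ ∈ C(p₁) and q₂ ∈ C(p₂))`. -/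
def perp2 (p q : PC2 × PC2) : Prop :=
  sharp perp perp p q ∨ (q.1 ∈ Cset p.1 ∧ q.2 ∈ Cset p.2)

-- ### auxiliary lemmas


abbrev E2 := EuclideanSpace ℂ (Fin 2)

lemma sqrt3_half_lt_one : Real.sqrt 3 / 2 < 1 := by
  nlinarith [Real.sq_sqrt (by norm_num : (3:ℝ) ≥ 0), Real.sqrt_nonneg 3]

lemma not_perp_self (p : PC2) : ¬ perp p p := by
  unfold perp
  rw [inner_self_eq_zero]
  exact p.rep_nonzero

lemma not_mem_Cset_self (p : PC2) : p ∉ Cset p := by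
  unfold Cset
  simp only [Set.mem_setOf_eq]
  rw [inner_self_eq_norm_sq_to_K]
  have hn : (0:ℝ) < ‖p.rep‖ := norm_pos_iff.mpr p.rep_nonzero
  intro h
  rw [norm_pow, RCLike.norm_ofReal, abs_of_pos hn, sq] at h
  nlinarith [sqrt3_half_lt_one, mul_pos hn hn]

lemma perp_symm {p q : PC2} (h : perp p q) : perp q p := by
  unfold perp at *
  rw [← inner_conj_symm, h, map_zero]
  
lemma Cset_symm {p q : PC2} (h : q ∈ Cset p) : p ∈ Cset q := by
  unfold Cset at *
  simp only [Set.mem_setOf_eq] at *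
  rw [← inner_conj_symm, RCLike.norm_conj, h]; ring

/-- the orthogonal vector -/
def ovec (v : E2) : E2 := WithLp.toLp 2 ![-(starRingEnd ℂ) (v 1), (starRingEnd ℂ) (v 0)]

lemma inner_E2 (v w : E2) : (inner ℂ v w : ℂ) = (starRingEnd ℂ) (v 0) * w 0 + (starRingEnd ℂ) (v 1) * w 1 := by
  simp [PiLp.inner_apply, RCLike.inner_apply, Fin.sum_univ_two]
  ring

lemma inner_ovec (v : E2) : (inner ℂ v (ovec v) : ℂ) = 0 := by
  rw [inner_E2]; simp [ovec]; ring

lemma ovec_ne {v : E2} (hv : v ≠ 0) : ovec v ≠ 0 := by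
  intro h
  apply hv
  ext i
  have h0 := congrArg (fun u : E2 => u 0) h
  have h1 := congrArg (fun u : E2 => u 1) h
  simp [ovec] at h0 h1
  fin_cases i <;> simpa using (by
    first
      | exact (starRingEnd ℂ).injective (by simpa using h1)
      | exact (starRingEnd ℂ).injective (by simpa using h0))

/-- solutions of ⟪w, x⟫ = 0 are multiples of a fixed vector -/
lemma exists_smul_of_inner_zero {w x : E2} (hw : w ≠ 0) (h : (inner ℂ w x : ℂ) = 0) :
    ∃ t : ℂ, x = t • (WithLp.toLp 2 ![(starRingEnd ℂ) (w 1), -(starRingEnd ℂ) (w 0)] : E2) := by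
  rw [inner_E2] at h
  by_cases h0 : w 0 = 0
  · have h1 : w 1 ≠ 0 := by
      intro h1; apply hw; ext i; fin_cases i <;> simp [h0, h1]
    have hx1 : x 1 = 0 := by
      have : (starRingEnd ℂ) (w 1) * x 1 = 0 := by rw [h0] at h; simpa using h
      rcases mul_eq_zero.mp this with hc | hc
      · exact absurd (by simpa using hc : w 1 = 0) h1
      · exact hc
    refine ⟨x 0 / (starRingEnd ℂ) (w 1), ?_⟩
    have hc1 : (starRingEnd ℂ) (w 1) ≠ 0 := by simpa using h1
    ext i
    fin_cases i <;> simp [h0, hx1]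
    field_simp
  · refine ⟨-(x 1) / (starRingEnd ℂ) (w 0), ?_⟩
    have hc0 : (starRingEnd ℂ) (w 0) ≠ 0 := by
      simpa using h0
    ext i
    fin_cases i <;> simp
    · -- x 0 = (-(x 1)/conj (w 0)) * conj (w 1)
      rw [div_mul_eq_mul_div, eq_div_iff hc0]
      linear_combination h
    · rw [div_mul_cancel₀ _ hc0, neg_neg]
lemma rep_mk_smul (v : E2) (hv : v ≠ 0) :
    ∃ a : ℂˣ, (a : ℂ) • v = (Projectivization.mk ℂ v hv).rep := by
  have := (mk_eq_mk_iff ℂ _ _ (Projectivization.mk ℂ v hv).rep_nonzero hv).mp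
    (mk_rep (Projectivization.mk ℂ v hv))
  exact this

lemma mk_of_smul {u : E2} (hun : u ≠ 0) {x : E2} (hx : x ≠ 0) {t : ℂ} (h : x = t • u) :
    Projectivization.mk ℂ x hx = Projectivization.mk ℂ u hun := by
  have ht : t ≠ 0 := by rintro rfl; rw [zero_smul] at h; exact hx h
  rw [mk_eq_mk_iff]
  exact ⟨Units.mk0 t ht, h.symm⟩

/-- if two rays are both perp (as reps) to a nonzero w, they are equal -/
lemma ray_eq_of_inner_zero {w : E2} (hw : w ≠ 0) {p q : PC2}
    (hp : (inner ℂ w p.rep : ℂ) = 0) (hq : (inner ℂ w q.rep : ℂ) = 0) : p = q := by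
  obtain ⟨s, hs⟩ := exists_smul_of_inner_zero hw hp
  obtain ⟨t, ht⟩ := exists_smul_of_inner_zero hw hq
  set u : E2 := WithLp.toLp 2 ![(starRingEnd ℂ) (w 1), -(starRingEnd ℂ) (w 0)] with hu
  have hs0 : s ≠ 0 := by rintro rfl; exact p.rep_nonzero (by simpa using hs)
  have ht0 : t ≠ 0 := by rintro rfl; exact q.rep_nonzero (by simpa using ht)
  have hun : u ≠ 0 := by
    intro h
    apply p.rep_nonzero; rw [hs, h, smul_zero]
  rw [← mk_rep p, ← mk_rep q, mk_of_smul hun p.rep_nonzero hs,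
    mk_of_smul hun q.rep_nonzero ht]

/-- the orthogonal ray of a ray -/
def oray (p : PC2) : PC2 := Projectivization.mk ℂ (ovec p.rep) (ovec_ne p.rep_nonzero)

lemma perp_oray (p : PC2) : perp p (oray p) := by
  unfold perp oray
  obtain ⟨a, ha⟩ := rep_mk_smul (ovec p.rep) (ovec_ne p.rep_nonzero)
  rw [← ha, inner_smul_right, inner_ovec, mul_zero]

/-- if a ray is perp to oray p then it equals p -/
lemma eq_of_perp_oray {p q : PC2} (h : perp q (oray p)) : q = p := by
  have hw : (oray p).rep ≠ 0 := (oray p).rep_nonzero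
  apply ray_eq_of_inner_zero hw
  · rw [← inner_conj_symm, h, map_zero]
  · rw [← inner_conj_symm, perp_oray p, map_zero]

/-- `⊥₂` is an orthogonality relation on `Σ₁ × Σ₂`. -/
theorem stmt14 : IsOrthRel perp2 := by
  refine ⟨?_, ?_, ?_⟩
  · rintro p (⟨h | h⟩ | ⟨h, -⟩)
    · exact not_perp_self _ h
    · exact not_perp_self _ h
    · exact not_mem_Cset_self _ h
  · rintro p q (⟨h | h⟩ | ⟨h1, h2⟩)
    · exact Or.inl (Or.inl (perp_symm h))
    · exact Or.inl (Or.inr (perp_symm h))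
    · exact Or.inr ⟨Cset_symm h1, Cset_symm h2⟩
  · intro p
    apply Set.eq_singleton_iff_unique_mem.mpr
    constructor
    · -- p ∈ pol (pol {p})
      intro r hr
      have h := hr p (Set.mem_singleton p)
      -- perp2 r p → perp2 p r by symmetry
      rcases h with ⟨h | h⟩ | ⟨h1, h2⟩
      · exact Or.inl (Or.inl (perp_symm h))
      · exact Or.inl (Or.inr (perp_symm h))
      · exact Or.inr ⟨Cset_symm h1, Cset_symm h2⟩
    · intro q hq
      -- hq : ∀ r ∈ pol perp2 {p}, perp2 q r
      have key : ∀ r : PC2 × PC2, perp2 r p → perp2 q r := by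
        intro r hr
        exact hq r (by intro x hx; rw [Set.mem_singleton_iff] at hx; rwa [hx])
      have h1 : q.1 = p.1 := by
        have hr : perp2 (oray p.1, q.2) p := by
          refine Or.inl (Or.inl ?_)
          exact perp_symm (perp_oray p.1)
        rcases key _ hr with ⟨h | h⟩ | ⟨-, h⟩
        · exact eq_of_perp_oray h
        · exact absurd h (not_perp_self _)
        · exact absurd h (not_mem_Cset_self _)
      have h2 : q.2 = p.2 := by
        have hr : perp2 (q.1, oray p.2) p := by
          refine Or.inl (Or.inr ?_)
          exact perp_symm (perp_oray p.2)
        rcases key _ hr with ⟨h | h⟩ | ⟨h, -⟩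
        · exact absurd h (not_perp_self _)
        · exact eq_of_perp_oray h
        · exact absurd h (not_mem_Cset_self _)
      exact Prod.ext h1 h2

end
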